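/- For complex x with |x| < 1, log Γ(x+1) = −γ·x + ∑_{k=2}^∞ (ζ(k)/k)·(−x)^k, where γ is the Euler–Mascheroni constant and ζ is the Riemann zeta function. -/

import Mathlib

open Complex

namespace Stmt19
open Filter Topology Finset

/-- telescoping bound -/
lemma sum_inv_sq_shift_le (n : ℕ) : ∑ j ∈ Finset.range n, 1 / ((j : ℝ) + 2) ^ 2 ≤ 1 := by
  have key : ∑ j ∈ Finset.range n, (1 / ((j : ℝ) + 1) - 1 / ((j : ℝ) + 2)) ≤ 1 := by
    have h := Finset.sum_range_sub' (fun j : ℕ => 1 / ((j : ℝ) + 1)) n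
    have e : ∑ j ∈ Finset.range n, (1 / ((j : ℝ) + 1) - 1 / ((j : ℝ) + 2))
        = ∑ j ∈ Finset.range n, ((1:ℝ) / ((j : ℝ) + 1) - 1 / (((j + 1 : ℕ) : ℝ) + 1)) := by
      refine Finset.sum_congr rfl fun j _ => ?_
      push_cast; ring
    rw [e, h]
    have h2 : (0:ℝ) ≤ 1 / ((n : ℝ) + 1) := by positivity
    norm_num
    linarith
  refine le_trans (Finset.sum_le_sum fun j _ => ?_) key
  have h1 : (0:ℝ) < (j : ℝ) + 1 := by positivity
  have h2 : (0:ℝ) < (j : ℝ) + 2 := by positivity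
  rw [div_sub_div _ _ (ne_of_gt h1) (ne_of_gt h2),
    div_le_div_iff₀ (by positivity) (by positivity)]
  nlinarith [sq_nonneg ((j:ℝ))]

lemma summable_inv_nat_pow_c (m : ℕ) (hm : 2 ≤ m) :
    Summable (fun n : ℕ => 1 / (n : ℂ) ^ m) := by
  apply Summable.of_norm
  have h : Summable (fun n : ℕ => 1 / (n : ℝ) ^ m) :=
    Real.summable_one_div_nat_pow.mpr (by omega)
  refine h.congr fun n => ?_
  simp [norm_div, norm_pow]

lemma summable_inv_shift2_sq :
    Summable (fun n : ℕ => 1 / ((n : ℝ) + 2) ^ 2) := by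
  have h : Summable (fun n : ℕ => 1 / (n : ℝ) ^ 2) :=
    Real.summable_one_div_nat_pow.mpr one_lt_two
  refine ((summable_nat_add_iff 2).mpr h).congr fun n => ?_
  push_cast; ring

lemma norm_inv_shift2_pow (n m : ℕ) :
    ‖1 / ((n : ℂ) + 2) ^ m‖ = 1 / ((n : ℝ) + 2) ^ m := by
  have e : ((n : ℂ) + 2) = (((n + 2 : ℕ)) : ℂ) := by push_cast; ring
  rw [norm_div, norm_one, norm_pow, e, Complex.norm_natCast]
  push_cast; ring

lemma summable_inv_shift2_c (m : ℕ) (hm : 2 ≤ m) :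
    Summable (fun n : ℕ => 1 / ((n : ℂ) + 2) ^ m) := by
  apply Summable.of_norm
  refine Summable.of_nonneg_of_le (fun n => norm_nonneg _) (fun n => ?_) summable_inv_shift2_sq
  rw [norm_inv_shift2_pow]
  apply one_div_le_one_div_of_le (by positivity)
  exact pow_le_pow_right₀ (by linarith [Nat.cast_nonneg (α := ℝ) n]) hm

set_option maxHeartbeats 1000000 in
lemma hasSum_zeta_shift (m : ℕ) (hm : 2 ≤ m) :
    HasSum (fun n : ℕ => 1 / ((n : ℂ) + 2) ^ m) (riemannZeta ((m : ℕ) : ℂ) - 1) := by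
  have hs := summable_inv_nat_pow_c m hm
  have hH : HasSum (fun n : ℕ => 1 / (n : ℂ) ^ m) (riemannZeta ((m : ℕ) : ℂ)) := by
    rw [zeta_nat_eq_tsum_of_gt_one (by omega : 1 < m)]
    exact hs.hasSum
  have h2 : HasSum (fun n : ℕ => 1 / ((n + 2 : ℕ) : ℂ) ^ m)
      (riemannZeta ((m : ℕ) : ℂ) - ∑ i ∈ Finset.range 2, 1 / (i : ℂ) ^ m) :=
    (hasSum_nat_add_iff (f := fun n : ℕ => 1 / (n : ℂ) ^ m) 2).mpr (by rwa [sub_add_cancel])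
  have e1 : ∑ i ∈ Finset.range 2, 1 / (i : ℂ) ^ m = 1 := by
    rw [Finset.sum_range_succ, Finset.sum_range_one]
    norm_num [zero_pow (show m ≠ 0 by omega)]
  rw [e1] at h2
  exact h2.congr_fun fun n => by push_cast; ring_nf

lemma zeta_sub_one_bound (k : ℕ) :
    ‖riemannZeta (((k + 2 : ℕ) : ℂ)) - 1‖ ≤ (1 / 2 : ℝ) ^ k := by
  rw [← (hasSum_zeta_shift (k + 2) (by omega)).tsum_eq]
  have hsc := summable_inv_shift2_c (k + 2) (by omega)
  have hbound : ∀ n : ℕ, ‖1 / ((n : ℂ) + 2) ^ (k + 2)‖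
      ≤ (1 / 2 : ℝ) ^ k * (1 / ((n : ℝ) + 2) ^ 2) := by
    intro n
    rw [norm_inv_shift2_pow]
    have ha : (0:ℝ) < (n : ℝ) + 2 := by positivity
    have e : 1 / ((n:ℝ) + 2) ^ (k + 2) = (1 / ((n:ℝ) + 2)) ^ k * (1 / ((n:ℝ) + 2) ^ 2) := by
      rw [pow_add, one_div_pow, one_div_mul_one_div]
    rw [e]
    gcongr
    linarith [Nat.cast_nonneg (α := ℝ) n]
  calc ‖∑' n : ℕ, 1 / ((n : ℂ) + 2) ^ (k + 2)‖
      ≤ ∑' n : ℕ, ‖1 / ((n : ℂ) + 2) ^ (k + 2)‖ := norm_tsum_le_tsum_norm hsc.norm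
    _ ≤ ∑' n : ℕ, (1 / 2 : ℝ) ^ k * (1 / ((n : ℝ) + 2) ^ 2) :=
        Summable.tsum_le_tsum hbound hsc.norm (summable_inv_shift2_sq.mul_left _)
    _ = (1 / 2 : ℝ) ^ k * ∑' n : ℕ, 1 / ((n : ℝ) + 2) ^ 2 := tsum_mul_left
    _ ≤ (1 / 2 : ℝ) ^ k * 1 := by
        gcongr
        exact Summable.tsum_le_of_sum_range_le summable_inv_shift2_sq sum_inv_sq_shift_le
    _ = (1 / 2 : ℝ) ^ k := mul_one _

/-- shifted log taylor series -/
lemma hasSum_log_shift {z : ℂ} (hz : ‖z‖ < 1) :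
    HasSum (fun k : ℕ => -((-z) ^ (k + 2)) / ((k : ℂ) + 2)) (Complex.log (1 + z) - z) := by
  have h := hasSum_taylorSeries_log hz
  have h2 : HasSum (fun k : ℕ => (-1:ℂ) ^ (k + 2 + 1) * z ^ (k + 2) / ((k + 2 : ℕ) : ℂ))
      (Complex.log (1 + z) - ∑ i ∈ Finset.range 2, (-1:ℂ) ^ (i + 1) * z ^ i / (i : ℂ)) :=
    (hasSum_nat_add_iff (f := fun i : ℕ => (-1:ℂ) ^ (i + 1) * z ^ i / (i : ℂ)) 2).mpr
      (by rwa [sub_add_cancel])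
  have e1 : ∑ i ∈ Finset.range 2, (-1:ℂ) ^ (i + 1) * z ^ i / (i : ℂ) = z := by
    simp [Finset.sum_range_succ]
  rw [e1] at h2
  refine h2.congr_fun fun k => ?_
  have e2 : ((-1:ℂ)) ^ (k + 2 + 1) * z ^ (k + 2) = -((-z) ^ (k + 2)) := by
    rw [neg_pow z]; ring
  push_cast
  rw [e2]


lemma norm_k_add_two (k : ℕ) : ‖(k : ℂ) + 2‖ = (k : ℝ) + 2 := by
  have e : ((k : ℂ) + 2) = (((k + 2 : ℕ)) : ℂ) := by push_cast; ring
  rw [e, Complex.norm_natCast]; push_cast; ring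

lemma norm_j_add_one (j : ℕ) : ‖(j : ℂ) + 1‖ = (j : ℝ) + 1 := by
  have e : ((j : ℂ) + 1) = (((j + 1 : ℕ)) : ℂ) := by push_cast; ring
  rw [e, Complex.norm_natCast]; push_cast; ring

lemma zeta_cast (k : ℕ) : riemannZeta ((k : ℂ) + 2) = riemannZeta (((k + 2 : ℕ) : ℂ)) := by
  congr 1; push_cast; ring

lemma b_term_norm_le (x : ℂ) (hx : ‖x‖ < 1) (k : ℕ) :
    ‖(riemannZeta ((k : ℂ) + 2) - 1) / ((k : ℂ) + 2) * (-x) ^ (k + 2)‖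
      ≤ (1 / 2 : ℝ) ^ k * (1 / 2) := by
  rw [norm_mul, norm_div, norm_pow, norm_neg]
  have h1 : ‖riemannZeta ((k : ℂ) + 2) - 1‖ ≤ (1 / 2 : ℝ) ^ k := by
    rw [zeta_cast]; exact zeta_sub_one_bound k
  have h2 : (2:ℝ) ≤ ‖(k : ℂ) + 2‖ := by
    rw [norm_k_add_two]; linarith [Nat.cast_nonneg (α := ℝ) k]
  have h3 : ‖x‖ ^ (k + 2) ≤ 1 := pow_le_one₀ (norm_nonneg x) hx.le
  calc ‖riemannZeta ((k : ℂ) + 2) - 1‖ / ‖(k : ℂ) + 2‖ * ‖x‖ ^ (k + 2)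
      ≤ (1 / 2 : ℝ) ^ k / 2 * 1 := by gcongr <;> linarith
    _ = (1 / 2 : ℝ) ^ k * (1 / 2) := by ring

lemma summable_b (x : ℂ) (hx : ‖x‖ < 1) :
    Summable (fun k : ℕ => (riemannZeta ((k : ℂ) + 2) - 1) / ((k : ℂ) + 2) * (-x) ^ (k + 2)) :=
  Summable.of_norm_bounded
    ((summable_geometric_of_lt_one (r := (1 / 2 : ℝ)) (by norm_num) (by norm_num)).mul_right (1 / 2))
    (b_term_norm_le x hx)

lemma norm_b_tsum_le (x : ℂ) (hx : ‖x‖ < 1) :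
    ‖∑' k : ℕ, (riemannZeta ((k : ℂ) + 2) - 1) / ((k : ℂ) + 2) * (-x) ^ (k + 2)‖ ≤ 1 := by
  have hgeom : HasSum (fun k : ℕ => (1 / 2 : ℝ) ^ k * (1 / 2)) 1 := by
    have h := (hasSum_geometric_of_lt_one (r := (1/2:ℝ)) (by norm_num) (by norm_num)).mul_right
      (1/2 : ℝ)
    norm_num at h
    exact h
  exact tsum_of_norm_bounded hgeom (b_term_norm_le x hx)

lemma im_bound (x : ℂ) (hx : ‖x‖ < 1) :
    |(-(Real.eulerMascheroniConstant : ℂ) * x +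
      ∑' k : ℕ, (riemannZeta ((k : ℂ) + 2) / ((k : ℂ) + 2)) * (-x) ^ (k + 2)).im| < Real.pi := by
  set γ : ℝ := Real.eulerMascheroniConstant with hγ
  have hγ1 : 1 / 2 < γ := Real.one_half_lt_eulerMascheroniConstant
  have hγ2 : γ < 2 / 3 := Real.eulerMascheroniConstant_lt_two_thirds
  have hc := hasSum_log_shift hx
  have hb := summable_b x hx
  have hsplit : ∑' k : ℕ, (riemannZeta ((k : ℂ) + 2) / ((k : ℂ) + 2)) * (-x) ^ (k + 2)
      = (∑' k : ℕ, (riemannZeta ((k : ℂ) + 2) - 1) / ((k : ℂ) + 2) * (-x) ^ (k + 2))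
        - (Complex.log (1 + x) - x) := by
    rw [← (hb.hasSum.sub hc).tsum_eq]
    exact tsum_congr fun k => by ring
  rw [hsplit]
  set B := ∑' k : ℕ, (riemannZeta ((k : ℂ) + 2) - 1) / ((k : ℂ) + 2) * (-x) ^ (k + 2) with hB
  have hBle : ‖B‖ ≤ 1 := norm_b_tsum_le x hx
  have hre : 0 < (1 + x).re := by
    have h := Complex.abs_re_le_norm x
    have hxre := (abs_lt.mp (lt_of_le_of_lt h hx)).1
    rw [Complex.add_re, Complex.one_re]
    linarith
  have harg : |(1 + x).arg| < Real.pi / 2 :=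
    Complex.abs_arg_lt_pi_div_two_iff.mpr (Or.inl hre)
  have him : (-(γ:ℂ) * x + (B - (Complex.log (1 + x) - x))).im
      = (1 - γ) * x.im + B.im - (1 + x).arg := by
    rw [← Complex.log_im]
    simp [Complex.add_im, Complex.sub_im, Complex.neg_im, Complex.mul_im,
      Complex.ofReal_re, Complex.ofReal_im, Complex.neg_re]
    ring
  rw [him]
  have h1 : |x.im| ≤ 1 := by
    have h := Complex.abs_im_le_norm x
    linarith
  have h2 : |B.im| ≤ 1 := by
    have h := Complex.abs_im_le_norm B
    linarith
  have hπ := Real.pi_gt_three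
  have key : |(1 - γ) * x.im + B.im - (1 + x).arg|
      ≤ |(1 - γ) * x.im| + |B.im| + |(1 + x).arg| := by
    rw [sub_eq_add_neg]
    exact (abs_add_three _ _ _).trans (by rw [abs_neg])
  have h3 : |(1 - γ) * x.im| ≤ 1 / 2 := by
    rw [abs_mul, _root_.abs_of_nonneg (by linarith : (0:ℝ) ≤ 1 - γ)]
    nlinarith [abs_nonneg x.im]
  calc |(1 - γ) * x.im + B.im - (1 + x).arg|
      ≤ |(1 - γ) * x.im| + |B.im| + |(1 + x).arg| := key
    _ < 1 / 2 + 1 + Real.pi / 2 := by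
        have := abs_nonneg ((1 - γ) * x.im)
        linarith
    _ < Real.pi := by linarith

lemma j_add_one_ne (j : ℕ) : ((j : ℂ) + 1) ≠ 0 := by
  intro h
  have := norm_j_add_one j
  rw [h, norm_zero] at this
  have := Nat.cast_nonneg (α := ℝ) j
  linarith

lemma norm_div_j_lt (x : ℂ) (hx : ‖x‖ < 1) (j : ℕ) : ‖x / ((j : ℂ) + 1)‖ < 1 := by
  rw [norm_div, norm_j_add_one]
  have h1 : (1:ℝ) ≤ (j : ℝ) + 1 := by linarith [Nat.cast_nonneg (α := ℝ) j]
  calc ‖x‖ / ((j : ℝ) + 1) ≤ ‖x‖ / 1 := by gcongr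
    _ < 1 := by simpa using hx

lemma hasSum_u (x : ℂ) (hx : ‖x‖ < 1) (j : ℕ) :
    HasSum (fun k : ℕ => ((-x) ^ (k + 2) / ((k : ℂ) + 2)) * (1 / ((j : ℂ) + 1)) ^ (k + 2))
      (x / ((j : ℂ) + 1) - Complex.log (1 + x / ((j : ℂ) + 1))) := by
  have h := (hasSum_log_shift (norm_div_j_lt x hx j)).neg
  rw [neg_sub] at h
  refine h.congr_fun fun k => ?_
  have e : (-(x / ((j : ℂ) + 1))) = (-x) * (1 / ((j : ℂ) + 1)) := by ring
  rw [e, mul_pow]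
  ring

lemma sum_inv_sq_le_two (n : ℕ) : ∑ j ∈ Finset.range n, 1 / ((j : ℝ) + 1) ^ 2 ≤ 2 := by
  cases n with
  | zero => simp
  | succ m =>
    rw [Finset.sum_range_succ']
    have e : ∀ j ∈ Finset.range m, 1 / (((j + 1 : ℕ) : ℝ) + 1) ^ 2 = 1 / ((j : ℝ) + 2) ^ 2 :=
      fun j _ => by push_cast; ring_nf
    rw [Finset.sum_congr rfl e]
    have h := sum_inv_sq_shift_le m
    have h0 : 1 / (((0:ℕ):ℝ) + 1) ^ 2 = 1 := by norm_num
    rw [h0]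
    linarith

set_option maxHeartbeats 1000000 in
lemma hasSum_zeta_shift1 (m : ℕ) (hm : 2 ≤ m) :
    HasSum (fun n : ℕ => (1 / ((n : ℂ) + 1)) ^ m) (riemannZeta ((m : ℕ) : ℂ)) := by
  have hs := summable_inv_nat_pow_c m hm
  have hH : HasSum (fun n : ℕ => 1 / (n : ℂ) ^ m) (riemannZeta ((m : ℕ) : ℂ)) := by
    rw [zeta_nat_eq_tsum_of_gt_one (by omega : 1 < m)]
    exact hs.hasSum
  have h2 : HasSum (fun n : ℕ => 1 / ((n + 1 : ℕ) : ℂ) ^ m)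
      (riemannZeta ((m : ℕ) : ℂ) - ∑ i ∈ Finset.range 1, 1 / (i : ℂ) ^ m) :=
    (hasSum_nat_add_iff (f := fun n : ℕ => 1 / (n : ℂ) ^ m) 1).mpr (by rwa [sub_add_cancel])
  have e1 : ∑ i ∈ Finset.range 1, 1 / (i : ℂ) ^ m = 0 := by
    rw [Finset.sum_range_one]
    norm_num [zero_pow (show m ≠ 0 by omega)]
  rw [e1, sub_zero] at h2
  refine h2.congr_fun fun n => ?_
  rw [div_pow, one_pow]
  push_cast
  ring_nf

set_option maxHeartbeats 2000000 in
lemma exp_eq (x : ℂ) (hx : ‖x‖ < 1) :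
    Complex.exp (-(Real.eulerMascheroniConstant : ℂ) * x +
      ∑' k : ℕ, (riemannZeta ((k : ℂ) + 2) / ((k : ℂ) + 2)) * (-x) ^ (k + 2)) =
    Complex.Gamma (x + 1) := by
  have hne : ∀ j : ℕ, (1 : ℂ) + x / ((j : ℂ) + 1) ≠ 0 := by
    intro j h
    have h2 := norm_div_j_lt x hx j
    rw [show x / ((j : ℂ) + 1) = -1 from by linear_combination h] at h2
    simp at h2
  have hne2 : ∀ j : ℕ, x + ((j : ℂ) + 1) ≠ 0 := by
    intro j h
    have h3 : x / ((j : ℂ) + 1) = -1 := by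
      rw [div_eq_iff (j_add_one_ne j)]; linear_combination h
    have h2 := norm_div_j_lt x hx j
    rw [h3] at h2; simp at h2
  set S : ℕ → ℂ := fun n => x * (Real.log n : ℂ)
    - ∑ j ∈ Finset.range n, Complex.log (1 + x / ((j : ℂ) + 1)) with hS
  -- Step E1 : exp (S n) in terms of GammaSeq
  have E1 : ∀ n : ℕ, 1 ≤ n → Complex.exp (S n)
      = Complex.GammaSeq (x + 1) n * ((x + n + 1) / n) := by
    intro n hn
    have hn0 : ((n : ℂ)) ≠ 0 := Nat.cast_ne_zero.mpr (by omega)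
    have hfact : (∏ j ∈ Finset.range n, ((j : ℂ) + 1)) = (n.factorial : ℂ) := by
      rw [← Finset.prod_range_add_one_eq_factorial n]
      push_cast
      rfl
    have hprodne : (∏ j ∈ Finset.range n, (x + ((j : ℂ) + 1))) ≠ 0 :=
      Finset.prod_ne_zero_iff.mpr fun j _ => hne2 j
    have hfactne : ((n.factorial : ℂ)) ≠ 0 := Nat.cast_ne_zero.mpr n.factorial_ne_zero
    have hexp : Complex.exp (S n)
        = (n : ℂ) ^ x * ((n.factorial : ℂ) / ∏ j ∈ Finset.range n, (x + ((j : ℂ) + 1))) := by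
      simp only [hS]
      rw [Complex.exp_sub, Complex.exp_sum]
      rw [Finset.prod_congr rfl fun j (_ : j ∈ Finset.range n) => Complex.exp_log (hne j)]
      have e2 : Complex.exp (x * (Real.log n : ℂ)) = (n : ℂ) ^ x := by
        rw [Complex.cpow_def_of_ne_zero hn0]
        congr 1
        rw [← Complex.ofReal_natCast, ← Complex.ofReal_log (Nat.cast_nonneg n)]
        ring
      rw [e2]
      have e3 : ∏ j ∈ Finset.range n, (1 + x / ((j : ℂ) + 1))
          = (∏ j ∈ Finset.range n, (x + ((j : ℂ) + 1))) / (n.factorial : ℂ) := by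
        rw [← hfact, ← Finset.prod_div_distrib]
        refine Finset.prod_congr rfl fun j _ => ?_
        have hj := j_add_one_ne j
        field_simp
        ring
      rw [e3]
      field_simp
    rw [hexp, Complex.GammaSeq, Finset.prod_range_succ]
    rw [Finset.prod_congr rfl fun j (_ : j ∈ Finset.range n) =>
      (by ring : (x + 1 + (j : ℂ)) = x + ((j : ℂ) + 1))]
    rw [Complex.cpow_add _ _ hn0, Complex.cpow_one]
    have hne3 : x + 1 + (n : ℂ) ≠ 0 := by
      have := hne2 n; intro h; exact this (by linear_combination h)
    field_simp
    ring
  -- Step E2 : exp ∘ S tends to Gamma (x+1)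
  have hGS := Complex.GammaSeq_tendsto_Gamma (x + 1)
  have hinv : Filter.Tendsto (fun n : ℕ => ((n : ℂ))⁻¹) Filter.atTop (nhds 0) := by
    have hr := tendsto_inv_atTop_nhds_zero_nat (𝕜 := ℝ)
    have h2 := (Complex.continuous_ofReal.tendsto (0 : ℝ)).comp hr
    rw [Complex.ofReal_zero] at h2
    refine h2.congr fun n => ?_
    show ((((n:ℝ))⁻¹ : ℝ) : ℂ) = ((n:ℂ))⁻¹
    push_cast
    rfl
  have hfrac : Filter.Tendsto (fun n : ℕ => (x + n + 1) / (n : ℂ)) Filter.atTop (nhds 1) := by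
    have h4 : Filter.Tendsto (fun n : ℕ => (x + 1) * ((n : ℂ))⁻¹ + 1) Filter.atTop (nhds 1) := by
      have h5 := (hinv.const_mul (x + 1)).add_const 1
      simpa using h5
    refine h4.congr' ?_
    filter_upwards [Filter.eventually_ge_atTop 1] with n hn
    have hn0 : ((n : ℂ)) ≠ 0 := Nat.cast_ne_zero.mpr (by omega)
    field_simp
    ring
  have E2 : Filter.Tendsto (fun n => Complex.exp (S n)) Filter.atTop
      (nhds (Complex.Gamma (x + 1))) := by
    have h6 := hGS.mul hfrac
    rw [mul_one] at h6
    refine h6.congr' ?_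
    filter_upwards [Filter.eventually_ge_atTop 1] with n hn
    exact (E1 n hn).symm
  -- Step E3 : S tends to the series
  set u : ℕ → ℕ → ℂ :=
    fun j k => ((-x) ^ (k + 2) / ((k : ℂ) + 2)) * (1 / ((j : ℂ) + 1)) ^ (k + 2) with hu
  have hSn : ∀ n : ℕ, S n = x * ((Real.log n : ℂ) - ((harmonic n : ℚ) : ℂ))
      + ∑' k : ℕ, ∑ j ∈ Finset.range n, u j k := by
    intro n
    have hlog : ∀ j ∈ Finset.range n, Complex.log (1 + x / ((j : ℂ) + 1))
        = x / ((j : ℂ) + 1) - ∑' k : ℕ, u j k := by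
      intro j _
      have h := (hasSum_u x hx j).tsum_eq
      linear_combination h
    simp only [hS]
    rw [Finset.sum_congr rfl hlog, Finset.sum_sub_distrib]
    have hH : ((harmonic n : ℚ) : ℂ) = ∑ j ∈ Finset.range n, 1 / ((j : ℂ) + 1) := by
      rw [harmonic]
      push_cast
      simp [one_div]
    have hswap : ∑ j ∈ Finset.range n, ∑' k : ℕ, u j k
        = ∑' k : ℕ, ∑ j ∈ Finset.range n, u j k :=
      (Summable.tsum_finsetSum fun j _ => (hasSum_u x hx j).summable).symm
    have hxsum : ∑ j ∈ Finset.range n, x / ((j : ℂ) + 1)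
        = x * ∑ j ∈ Finset.range n, 1 / ((j : ℂ) + 1) := by
      rw [Finset.mul_sum]
      exact Finset.sum_congr rfl fun j _ => by ring
    rw [hswap, hxsum, hH]
    ring
  have E3b : Filter.Tendsto (fun n : ℕ => x * ((Real.log n : ℂ) - ((harmonic n : ℚ) : ℂ)))
      Filter.atTop (nhds (-(Real.eulerMascheroniConstant : ℂ) * x)) := by
    have h1 : Filter.Tendsto (fun n : ℕ => Real.log n - (harmonic n : ℝ)) Filter.atTop
        (nhds (-Real.eulerMascheroniConstant)) := by
      have h := Real.tendsto_harmonic_sub_log.neg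
      refine h.congr fun n => by ring
    have h2 : Filter.Tendsto (fun n : ℕ => (((Real.log n - (harmonic n : ℝ)) : ℝ) : ℂ))
        Filter.atTop (nhds (((-Real.eulerMascheroniConstant : ℝ)) : ℂ)) :=
      (Complex.continuous_ofReal.tendsto _).comp h1
    have h4 := h2.const_mul x
    have e : (fun n : ℕ => x * (((Real.log n - (harmonic n : ℝ)) : ℝ) : ℂ))
        = fun n : ℕ => x * ((Real.log n : ℂ) - ((harmonic n : ℚ) : ℂ)) := by
      funext n; push_cast; ring
    have e2 : x * (((-Real.eulerMascheroniConstant : ℝ)) : ℂ)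
        = -(Real.eulerMascheroniConstant : ℂ) * x := by push_cast; ring
    rw [e, e2] at h4
    exact h4
  have hzeta : ∀ k : ℕ, Filter.Tendsto (fun n : ℕ => ∑ j ∈ Finset.range n, u j k)
      Filter.atTop (nhds ((riemannZeta ((k : ℂ) + 2) / ((k : ℂ) + 2)) * (-x) ^ (k + 2))) := by
    intro k
    have hz := (hasSum_zeta_shift1 (k + 2) (by omega)).tendsto_sum_nat
    have h2 := hz.const_mul ((-x) ^ (k + 2) / ((k : ℂ) + 2))
    have e2 : ((-x) ^ (k + 2) / ((k : ℂ) + 2)) * riemannZeta (((k + 2 : ℕ)) : ℂ)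
        = (riemannZeta ((k : ℂ) + 2) / ((k : ℂ) + 2)) * (-x) ^ (k + 2) := by
      rw [zeta_cast]; ring
    rw [e2] at h2
    refine h2.congr fun n => ?_
    rw [Finset.mul_sum]
  have hbound : ∀ n : ℕ, ∀ k : ℕ, ‖∑ j ∈ Finset.range n, u j k‖ ≤ 2 * ‖x‖ ^ k := by
    intro n k
    have hterm : ∀ j ∈ Finset.range n, ‖u j k‖ ≤ ‖x‖ ^ k * (1 / ((j : ℝ) + 1) ^ 2) := by
      intro j _
      have hj1 : (0:ℝ) < (j : ℝ) + 1 := by positivity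
      simp only [hu]
      rw [norm_mul, norm_div, norm_pow, norm_neg, norm_pow, norm_div, norm_one,
        norm_j_add_one, norm_k_add_two]
      have h1 : ‖x‖ ^ (k + 2) / ((k : ℝ) + 2) ≤ ‖x‖ ^ k := by
        have ha : ‖x‖ ^ (k + 2) ≤ ‖x‖ ^ k :=
          pow_le_pow_of_le_one (norm_nonneg x) hx.le (by omega)
        have hb : (1:ℝ) ≤ (k : ℝ) + 2 := by linarith [Nat.cast_nonneg (α := ℝ) k]
        calc ‖x‖ ^ (k + 2) / ((k : ℝ) + 2) ≤ ‖x‖ ^ (k + 2) / 1 := by gcongr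
          _ = ‖x‖ ^ (k + 2) := div_one _
          _ ≤ ‖x‖ ^ k := ha
      have h2 : ((1:ℝ) / ((j : ℝ) + 1)) ^ (k + 2) ≤ (1 / ((j : ℝ) + 1)) ^ 2 := by
        apply pow_le_pow_of_le_one (by positivity) ?_ (by omega)
        rw [div_le_one hj1]
        linarith [Nat.cast_nonneg (α := ℝ) j]
      calc ‖x‖ ^ (k + 2) / ((k : ℝ) + 2) * ((1:ℝ) / ((j : ℝ) + 1)) ^ (k + 2)
          ≤ ‖x‖ ^ k * (1 / ((j : ℝ) + 1)) ^ 2 :=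
            mul_le_mul h1 h2 (by positivity) (by positivity)
        _ = ‖x‖ ^ k * (1 / ((j : ℝ) + 1) ^ 2) := by rw [div_pow, one_pow]
    calc ‖∑ j ∈ Finset.range n, u j k‖ ≤ ∑ j ∈ Finset.range n, ‖u j k‖ := norm_sum_le _ _
      _ ≤ ∑ j ∈ Finset.range n, ‖x‖ ^ k * (1 / ((j : ℝ) + 1) ^ 2) :=
          Finset.sum_le_sum hterm
      _ = ‖x‖ ^ k * ∑ j ∈ Finset.range n, 1 / ((j : ℝ) + 1) ^ 2 := by rw [Finset.mul_sum]
      _ ≤ ‖x‖ ^ k * 2 := by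
          gcongr
          exact sum_inv_sq_le_two n
      _ = 2 * ‖x‖ ^ k := by ring
  have E3c : Filter.Tendsto (fun n : ℕ => ∑' k : ℕ, ∑ j ∈ Finset.range n, u j k)
      Filter.atTop
      (nhds (∑' k : ℕ, (riemannZeta ((k : ℂ) + 2) / ((k : ℂ) + 2)) * (-x) ^ (k + 2))) :=
    tendsto_tsum_of_dominated_convergence
      ((summable_geometric_of_lt_one (norm_nonneg x) hx).mul_left 2) hzeta
      (Filter.Eventually.of_forall hbound)
  have E3 : Filter.Tendsto S Filter.atTop
      (nhds (-(Real.eulerMascheroniConstant : ℂ) * x +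
        ∑' k : ℕ, (riemannZeta ((k : ℂ) + 2) / ((k : ℂ) + 2)) * (-x) ^ (k + 2))) := by
    have h := E3b.add E3c
    refine Filter.Tendsto.congr (fun n => (hSn n).symm) h
  exact tendsto_nhds_unique ((Complex.continuous_exp.tendsto _).comp E3) E2

end Stmt19

open Filter Topology Finset Stmt19 in
theorem stmt_19 (x : ℂ) (hx : ‖x‖ < 1) :
    Complex.log (Complex.Gamma (x + 1)) =
      -(Real.eulerMascheroniConstant : ℂ) * x +
        ∑' k : ℕ, (riemannZeta ((k : ℂ) + 2) / ((k : ℂ) + 2)) * (-x) ^ (k + 2) := by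
  have hxn : ‖x‖ < 1 := hx
  rw [← Stmt19.exp_eq x hxn]
  have h2 := abs_lt.mp (Stmt19.im_bound x hxn)
  exact Complex.log_exp (by linarith [h2.1]) (le_of_lt h2.2)
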